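/- Let P(τ) = U_ref/(γ τ^γ) for γ > 0 (or P(τ) = -U_ref ln(τ) for γ = 0). If τ_i, u_i : ℝ → ℝ are differentiable, τ_i > 0, and they satisfy τ̇_i = (u_{i+1} - u_i)/ΔX and u̇_i = U_ref ΔX^γ (u_{i+1} - u_i)/(x_{i+1} - x_i)^{γ+1} with τ_i = (x_{i+1} - x_i)/ΔX, then the quantity w_i = u_i + P(τ_i) is constant in time, i.e., ẇ_i = 0. -/

import Mathlib

/-- 1D FTL: w_i = u_i + P(τ_i) is constant in time, where
P(τ) = U_ref/(γ τ^γ) for γ > 0. -/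
theorem stmt_0
    (ΔX Uref γ : ℝ) (hΔX : 0 < ΔX) (hU : 0 < Uref) (hγ : 0 < γ)
    (x xnext u unext τ : ℝ → ℝ)
    (hτpos : ∀ t, 0 < τ t)
    (hτdef : ∀ t, τ t = (xnext t - x t) / ΔX)
    (hτ' : ∀ t, HasDerivAt τ ((unext t - u t) / ΔX) t)
    (hu' : ∀ t, HasDerivAt u
      (Uref * ΔX ^ γ * (unext t - u t) / (xnext t - x t) ^ (γ + 1)) t) :
    ∀ t, HasDerivAt (fun t => u t + Uref / (γ * (τ t) ^ γ)) 0 t := by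
  intro t
  have hτt := hτpos t
  have hτne : τ t ≠ 0 := hτt.ne'
  have hg : HasDerivAt (fun t => γ * τ t ^ γ)
      (γ * ((unext t - u t) / ΔX * γ * τ t ^ (γ - 1))) t :=
    ((hτ' t).rpow_const (Or.inl hτne)).const_mul γ
  have hτγ : (0:ℝ) < τ t ^ γ := Real.rpow_pos_of_pos hτt γ
  have hgne : γ * τ t ^ γ ≠ 0 := by positivity
  have hP : HasDerivAt (fun t => Uref / (γ * τ t ^ γ))
      ((0 * (γ * τ t ^ γ) - Uref * (γ * ((unext t - u t) / ΔX * γ * τ t ^ (γ - 1))))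
        / (γ * τ t ^ γ) ^ 2) t :=
    (hasDerivAt_const t Uref).div hg hgne
  have hsum := (hu' t).add hP
  have hx : xnext t - x t = ΔX * τ t := by
    have := hτdef t
    field_simp at this
    linarith
  convert hsum using 1
  case e'_4 => rfl
  case e'_5 => rfl
  case e'_8 => rfl
  rw [hx, Real.mul_rpow hΔX.le hτt.le, Real.rpow_add_one hΔX.ne' γ,
    Real.rpow_add_one hτne γ]
  have h2 : τ t ^ γ = τ t ^ (γ - 1) * τ t := by
    rw [← Real.rpow_add_one hτne]; ring_nf
  rw [h2]
  have hB : (0:ℝ) < τ t ^ (γ - 1) := Real.rpow_pos_of_pos hτt _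
  have hC : (0:ℝ) < ΔX ^ γ := Real.rpow_pos_of_pos hΔX γ
  field_simp
  ring
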